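/- The QSO constructed from a graph G and strictly positive measure μ via P_{σ₁σ₂,σ} = μ(σ)/μ(Ω(G,σ₁,σ₂))·1[σ ∈ Ω(G,σ₁,σ₂)] is a Volterra QSO (P_{σ₁σ₂,σ} = 0 whenever σ ∉ {σ₁,σ₂}) if and only if the graph G is connected. -/

import Mathlib

open Classical

/-- The QSO constructed from a graph `G` and a strictly positive measure
`μ` is Volterra (`P_{σ₁σ₂,σ} = 0` whenever `σ ∉ {σ₁,σ₂}`) if and only if `G` is
connected. (Here `|Λ| ≥ 1` and `|Φ| ≥ 2`.) -/
theorem gibbs_qso_volterra_iff_connected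
    (Λ Φ : Type*) [Fintype Λ] [Fintype Φ] [DecidableEq Λ]
    [Nonempty Λ] (hΦ : 1 < Fintype.card Φ)
    (G : SimpleGraph Λ)
    (μ : (Λ → Φ) → ℝ)
    (hμpos : ∀ σ, 0 < μ σ) (hμsum : ∑ σ : Λ → Φ, μ σ = 1)
    (OmegaG : (Λ → Φ) → (Λ → Φ) → Set (Λ → Φ))
    (hOmega : ∀ σ₁ σ₂, OmegaG σ₁ σ₂ =
      {σ | ∀ x : Λ, (∀ y, G.Reachable x y → σ y = σ₁ y) ∨
                    (∀ y, G.Reachable x y → σ y = σ₂ y)})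
    (P : (Λ → Φ) → (Λ → Φ) → (Λ → Φ) → ℝ)
    (hP : ∀ σ₁ σ₂ σ, P σ₁ σ₂ σ =
      if σ ∈ OmegaG σ₁ σ₂ then
        μ σ / ∑ τ ∈ Finset.univ.filter (· ∈ OmegaG σ₁ σ₂), μ τ
      else 0) :
    (∀ σ₁ σ₂ σ : Λ → Φ, σ ≠ σ₁ → σ ≠ σ₂ → P σ₁ σ₂ σ = 0) ↔ G.Connected := by
  constructor
  · -- Volterra → connected
    intro hV
    by_contra hnc
    have hpre : ¬ G.Preconnected := fun h => hnc ⟨h⟩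
    simp only [SimpleGraph.Preconnected, not_forall] at hpre
    obtain ⟨x, z, hxz⟩ := hpre
    obtain ⟨a, b, hab⟩ := Fintype.exists_pair_of_one_lt_card hΦ
    set σ₁ : Λ → Φ := fun _ => a with hσ₁
    set σ₂ : Λ → Φ := fun _ => b with hσ₂
    set σ : Λ → Φ := fun y => if G.Reachable x y then a else b with hσ
    have hmem : σ ∈ OmegaG σ₁ σ₂ := by
      rw [hOmega]
      intro w
      by_cases hw : G.Reachable x w
      · left
        intro y hwy
        have : G.Reachable x y := hw.trans hwy
        simp [hσ, hσ₁, this]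
      · right
        intro y hwy
        have : ¬ G.Reachable x y := fun h => hw (h.trans hwy.symm)
        simp [hσ, hσ₂, this]
    have hne₁ : σ ≠ σ₁ := by
      intro h
      have := congrFun h z
      simp [hσ, hσ₁, hxz] at this
      exact hab this.symm
    have hne₂ : σ ≠ σ₂ := by
      intro h
      have := congrFun h x
      simp [hσ, hσ₂] at this
      exact hab this
    have hsum : 0 < ∑ τ ∈ Finset.univ.filter (· ∈ OmegaG σ₁ σ₂), μ τ := by
      apply Finset.sum_pos (fun τ _ => hμpos τ)
      exact ⟨σ, by simpa using hmem⟩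
    have hPpos : 0 < P σ₁ σ₂ σ := by
      rw [hP, if_pos hmem]
      exact div_pos (hμpos σ) hsum
    exact hPpos.ne' (hV σ₁ σ₂ σ hne₁ hne₂)
  · -- connected → Volterra
    intro hc σ₁ σ₂ σ hne₁ hne₂
    rw [hP, if_neg]
    rw [hOmega]
    intro hmem
    obtain ⟨x⟩ := (inferInstance : Nonempty Λ)
    rcases hmem x with h | h
    · exact hne₁ (funext fun y => h y (hc.preconnected x y))
    · exact hne₂ (funext fun y => h y (hc.preconnected x y))
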